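/- Let V, g, φ, ξ, η, A, D be as in the context, and suppose Aξ = αξ + βU for some real numbers α, β with β ≠ 0 and some unit vector U ∈ D (the non-Hopf case). If A_F(φX, Y) = φ(A_F(X, Y)) for all X, Y ∈ D, then AU = βξ, A(φU) = 0, and AZ = 0 for every Z ∈ D orthogonal to both U and φU; in particular g(AX, Y) = 0 for all X, Y ∈ D (the pointwise ruled condition). (Theorem 3, non-Hopf case.) -/

import Mathlib

open scoped InnerProductSpace

/-- The Cho operator `F_X` for `X` in the maximal holomorphic distribution `D`
(for such `X` the `k`-th Cho operator `F^{(k)}_X Y = g(φ(AX),Y)ξ − η(Y)φ(AX) − k·η(X)·φY`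
does not depend on `k`): `F_X Y = g(φ(AX), Y)·ξ − η(Y)·φ(AX)`. -/
noncomputable def choF {V : Type*} [NormedAddCommGroup V] [InnerProductSpace ℝ V]
    (φ A : V →ₗ[ℝ] V) (ξ : V) (X Y : V) : V :=
  ⟪φ (A X), Y⟫_ℝ • ξ - ⟪Y, ξ⟫_ℝ • φ (A X)

/-- `A_F(X, Y) = F_X (A Y) − A (F_X Y)` for `X ∈ D`. -/
noncomputable def AF {V : Type*} [NormedAddCommGroup V] [InnerProductSpace ℝ V]
    (φ A : V →ₗ[ℝ] V) (ξ : V) (X Y : V) : V :=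
  choF φ A ξ X (A Y) - A (choF φ A ξ X Y)

theorem thm3_nonHopf {V : Type*} [NormedAddCommGroup V] [InnerProductSpace ℝ V]
    [FiniteDimensional ℝ V] (hdim : 5 ≤ Module.finrank ℝ V)
    (φ : V →ₗ[ℝ] V) (ξ : V) (hξ : ‖ξ‖ = 1)
    (hφφ : ∀ X : V, φ (φ X) = -X + ⟪X, ξ⟫_ℝ • ξ)
    (hφg : ∀ X Y : V, ⟪φ X, φ Y⟫_ℝ = ⟪X, Y⟫_ℝ - ⟪X, ξ⟫_ℝ * ⟪Y, ξ⟫_ℝ)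
    (A : V →ₗ[ℝ] V) (hA : ∀ X Y : V, ⟪A X, Y⟫_ℝ = ⟪X, A Y⟫_ℝ)
    (α β : ℝ) (hβ : β ≠ 0) (U : V) (hU : ‖U‖ = 1) (hUξ : ⟪U, ξ⟫_ℝ = 0)
    (hAξ : A ξ = α • ξ + β • U)
    (hphi : ∀ X Y : V, ⟪X, ξ⟫_ℝ = 0 → ⟪Y, ξ⟫_ℝ = 0 →
      AF φ A ξ (φ X) Y = φ (AF φ A ξ X Y)) :
    A U = β • ξ ∧ A (φ U) = 0 ∧
      (∀ Z : V, ⟪Z, ξ⟫_ℝ = 0 → ⟪Z, U⟫_ℝ = 0 → ⟪Z, φ U⟫_ℝ = 0 → A Z = 0) ∧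
      (∀ X Y : V, ⟪X, ξ⟫_ℝ = 0 → ⟪Y, ξ⟫_ℝ = 0 → ⟪A X, Y⟫_ℝ = 0) := by
  have hξξ : ⟪ξ, ξ⟫_ℝ = 1 := by
    rw [real_inner_self_eq_norm_mul_norm, hξ]; norm_num
  have hUU : ⟪U, U⟫_ℝ = 1 := by
    rw [real_inner_self_eq_norm_mul_norm, hU]; norm_num
  have hφξ : φ ξ = 0 := by
    have h := hφg ξ ξ
    rw [hξξ] at h
    have h0 : ⟪φ ξ, φ ξ⟫_ℝ = 0 := by rw [h]; ring
    exact inner_self_eq_zero.mp h0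
  have hηφ : ∀ X : V, ⟪φ X, ξ⟫_ℝ = 0 := by
    intro X
    have h2 : φ (φ (φ X)) = - φ X := by
      rw [hφφ X, map_add, map_neg, map_smul, hφξ, smul_zero, add_zero]
    have h4 : ⟪φ (φ (φ X)), ξ⟫_ℝ = 0 := by
      rw [hφφ (φ X)]
      simp [inner_add_left, real_inner_smul_left, hξξ, hξ]
    rw [h2] at h4
    simpa using h4
  have hskew : ∀ X Y : V, ⟪φ X, Y⟫_ℝ = -⟪X, φ Y⟫_ℝ := by
    intro X Y
    have h := hφg X (φ Y)
    rw [hφφ Y] at h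
    simp only [inner_add_right, inner_neg_right, real_inner_smul_right, hηφ,
      mul_zero, add_zero, sub_zero] at h
    linarith
  have hUφU : ⟪U, φ U⟫_ℝ = 0 := by
    have h := hskew U U
    have h2 : ⟪φ U, U⟫_ℝ = ⟪U, φ U⟫_ℝ := real_inner_comm _ _
    linarith
  have hφUU : ⟪φ U, U⟫_ℝ = 0 := by rw [real_inner_comm]; exact hUφU
  have hφUφU : ⟪φ U, φ U⟫_ℝ = 1 := by rw [hφg U U, hUξ, hUU]; ring
  have hξU : ⟪ξ, U⟫_ℝ = 0 := by rw [real_inner_comm]; exact hUξ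
  have hξφU : ⟪ξ, φ U⟫_ℝ = 0 := by rw [real_inner_comm]; exact hηφ U
  have hAD : ∀ X : V, ⟪X, ξ⟫_ℝ = 0 → ⟪A X, ξ⟫_ℝ = β * ⟪X, U⟫_ℝ := by
    intro X hX
    rw [hA X ξ, hAξ]
    simp [inner_add_right, real_inner_smul_right, hX]
  have hAF : ∀ X Y W : V, ⟪Y, ξ⟫_ℝ = 0 →
      ⟪AF φ A ξ X Y, W⟫_ℝ = ⟪φ (A X), A Y⟫_ℝ * ⟪ξ, W⟫_ℝ
        - ⟪A Y, ξ⟫_ℝ * ⟪φ (A X), W⟫_ℝ - ⟪φ (A X), Y⟫_ℝ * ⟪A ξ, W⟫_ℝ := by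
    intro X Y W hY
    simp only [AF, choF, hY, zero_smul, sub_zero, map_sub, map_smul,
      inner_sub_left, real_inner_smul_left]
    try ring
  -- the main scalar equation derived from `hphi`
  have hE : ∀ X Y W : V, ⟪X, ξ⟫_ℝ = 0 → ⟪Y, ξ⟫_ℝ = 0 →
      ⟪φ (A (φ X)), A Y⟫_ℝ * ⟪ξ, W⟫_ℝ - β * ⟪Y, U⟫_ℝ * ⟪φ (A (φ X)), W⟫_ℝ
        - ⟪φ (A (φ X)), Y⟫_ℝ * (α * ⟪ξ, W⟫_ℝ + β * ⟪U, W⟫_ℝ)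
      = β * ⟪Y, U⟫_ℝ * (⟪A X, W⟫_ℝ - β * ⟪X, U⟫_ℝ * ⟪ξ, W⟫_ℝ)
        - β * ⟪φ (A X), Y⟫_ℝ * ⟪φ U, W⟫_ℝ := by
    intro X Y W hX hY
    have h := congrArg (fun v => ⟪v, W⟫_ℝ) (hphi X Y hX hY)
    rw [hAF (φ X) Y W hY] at h
    have hR : ⟪φ (AF φ A ξ X Y), W⟫_ℝ = -⟪AF φ A ξ X Y, φ W⟫_ℝ := hskew _ _
    rw [hR, hAF X Y (φ W) hY] at h
    have e1 : ⟪ξ, φ W⟫_ℝ = 0 := by rw [real_inner_comm]; exact hηφ W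
    have e2 : ⟪φ (A X), φ W⟫_ℝ = ⟪A X, W⟫_ℝ - (β * ⟪X, U⟫_ℝ) * ⟪W, ξ⟫_ℝ := by
      rw [hφg (A X) W, hAD X hX]
    have e3 : ⟪A ξ, φ W⟫_ℝ = -β * ⟪φ U, W⟫_ℝ := by
      rw [hAξ]
      simp only [inner_add_left, real_inner_smul_left, e1]
      have : ⟪U, φ W⟫_ℝ = -⟪φ U, W⟫_ℝ := by
        have := hskew U W; linarith
      rw [this]; ring
    have e4 : ⟪A ξ, W⟫_ℝ = α * ⟪ξ, W⟫_ℝ + β * ⟪U, W⟫_ℝ := by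
      rw [hAξ]; simp [inner_add_left, real_inner_smul_left]
    have e5 : ⟪A Y, ξ⟫_ℝ = β * ⟪Y, U⟫_ℝ := hAD Y hY
    have e6 : ⟪W, ξ⟫_ℝ = ⟪ξ, W⟫_ℝ := real_inner_comm _ _
    rw [e1, e2, e3, e4, e5, e6] at h
    linarith [h]
  -- key pointwise lemma: A X = β⟪X,U⟫ • ξ for X ∈ D
  have key : ∀ X : V, ⟪X, ξ⟫_ℝ = 0 → A X = (β * ⟪X, U⟫_ℝ) • ξ := by
    intro X hX
    -- (a1) pairing with U
    have ha1 : ∀ Y : V, ⟪Y, ξ⟫_ℝ = 0 → ⟪Y, U⟫_ℝ = 0 → ⟪φ (A (φ X)), Y⟫_ℝ = 0 := by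
      intro Y hY hYU
      have h := hE X Y U hX hY
      rw [hYU, hξU, hUU, hφUU] at h
      have h2 : β * ⟪φ (A (φ X)), Y⟫_ℝ = 0 := by linarith [h]
      exact (mul_eq_zero.mp h2).resolve_left hβ
    -- (a2) pairing with φU
    have ha2 : ∀ Y : V, ⟪Y, ξ⟫_ℝ = 0 → ⟪Y, U⟫_ℝ = 0 → ⟪φ (A X), Y⟫_ℝ = 0 := by
      intro Y hY hYU
      have h := hE X Y (φ U) hX hY
      rw [hYU, hξφU, hUφU, hφUφU] at h
      have h2 : β * ⟪φ (A X), Y⟫_ℝ = 0 := by linarith [h]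
      exact (mul_eq_zero.mp h2).resolve_left hβ
    -- (b) φ(A(φX)) ⊥ φU
    have hb : ⟪φ (A (φ X)), φ U⟫_ℝ = 0 := ha1 (φ U) (hηφ U) hφUU
    -- (c) ⟪φ(AX), U⟫ = 0, from hE with Y = U, W = φU
    have hc : ⟪φ (A X), U⟫_ℝ = 0 := by
      have h := hE X U (φ U) hX hUξ
      rw [hξφU, hUU, hUφU, hφUφU, hb] at h
      have hAXφU : ⟪A X, φ U⟫_ℝ = -⟪φ (A X), U⟫_ℝ := by
        have := hskew (A X) U; linarith
      rw [hAXφU] at h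
      have h2 : β * ⟪φ (A X), U⟫_ℝ = 0 := by linarith [h]
      exact (mul_eq_zero.mp h2).resolve_left hβ
    -- (d) φ(AX) = 0
    have hd : φ (A X) = 0 := by
      have h := ha2 (φ (A X)) (hηφ (A X)) hc
      exact inner_self_eq_zero.mp h
    -- (e) conclude
    have he := hφφ (A X)
    rw [hd, map_zero, hAD X hX] at he
    have he2 : (0 : V) + A X = -A X + (β * ⟪X, U⟫_ℝ) • ξ + A X := by rw [← he]
    simpa using he2
  refine ⟨?_, ?_, ?_, ?_⟩
  · rw [key U hUξ, hUU, mul_one]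
  · rw [key (φ U) (hηφ U), hφUU, mul_zero, zero_smul]
  · intro Z hZξ hZU _
    rw [key Z hZξ, hZU, mul_zero, zero_smul]
  · intro X Y hX hY
    have hξY : ⟪ξ, Y⟫_ℝ = 0 := by rw [real_inner_comm]; exact hY
    rw [key X hX, real_inner_smul_left, hξY, mul_zero]
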